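/- Let R be a (not necessarily commutative) ring and let A, H ∈ R. Define iterated commutators by ad_A^{(0)}(H) = H and ad_A^{(k+1)}(H) = ad_A^{(k)}(H)·A − A·ad_A^{(k)}(H). Then for every n ∈ ℕ: H·A^{2n+1} − A^{2n+1}·H = (2n+1)·Aⁿ·(HA − AH)·Aⁿ + Σ_{k=2}^{n+1} binom(n+1, k) · ( A^{n+1−k} · ad_A^{(k)}(H) · Aⁿ + (−1)^{k−1} · Aⁿ · ad_A^{(k)}(H) · A^{n+1−k} ). -/
import Mathlib


/-- Iterated commutator: `ad_A^(0)(H) = H`, `ad_A^(k+1)(H) = ad_A^(k)(H)·A − A·ad_A^(k)(H)`. -/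
def adIter {R : Type*} [Ring R] (A H : R) : ℕ → R
  | 0 => H
  | k + 1 => adIter A H k * A - A * adIter A H k


section
variable {R : Type*} [Ring R]

private noncomputable def Dm (A : R) : Module.End ℤ R :=
  LinearMap.mulRight ℤ A - LinearMap.mulLeft ℤ A

lemma Dm_pow_apply (A H : R) (k : ℕ) : ((Dm A) ^ k) H = adIter A H k := by
  induction k with
  | zero => rfl
  | succ k ih =>
    rw [pow_succ', Module.End.mul_apply, ih]
    simp [Dm, adIter]

lemma expand1 (A H : R) (m : ℕ) :
    H * A ^ m = ∑ k ∈ Finset.range (m + 1),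
      m.choose k • (A ^ (m - k) * adIter A H k) := by
  have hc : Commute (LinearMap.mulLeft ℤ A) (Dm A) :=
    (LinearMap.commute_mulLeft_right A A).sub_right (Commute.refl _)
  have hR : LinearMap.mulRight ℤ A = LinearMap.mulLeft ℤ A + Dm A := by
    simp [Dm]
  have h1 : H * A ^ m = ((LinearMap.mulLeft ℤ A + Dm A) ^ m) H := by
    rw [← hR, LinearMap.pow_mulRight, LinearMap.mulRight_apply]
  rw [h1, hc.add_pow]
  rw [LinearMap.sum_apply]
  have h2 : ∀ k ∈ Finset.range (m + 1),
      ((LinearMap.mulLeft ℤ A ^ k * Dm A ^ (m - k) * (m.choose k : Module.End ℤ R)) H)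
        = m.choose k • (A ^ k * adIter A H (m - k)) := by
    intro k hk
    rw [Module.End.mul_apply, Module.End.mul_apply, Module.End.natCast_apply,
      map_nsmul, map_nsmul, Dm_pow_apply, LinearMap.pow_mulLeft, LinearMap.mulLeft_apply]
  rw [Finset.sum_congr rfl h2, ← Finset.sum_range_reflect]
  apply Finset.sum_congr rfl
  intro j hj
  have hj' : j ≤ m := Nat.lt_succ_iff.mp (Finset.mem_range.mp hj)
  rw [Nat.add_sub_cancel, Nat.choose_symm hj', Nat.sub_sub_self hj']

lemma negDm_pow_apply (A H : R) (j : ℕ) :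
    ((-Dm A) ^ j) H = (-1 : R) ^ j * adIter A H j := by
  rcases Nat.even_or_odd j with h | h
  · rw [h.neg_pow, Dm_pow_apply, h.neg_one_pow, one_mul]
  · rw [h.neg_pow, h.neg_one_pow, LinearMap.neg_apply, Dm_pow_apply, neg_one_mul]

lemma expand2 (A H : R) (m : ℕ) :
    A ^ m * H = ∑ k ∈ Finset.range (m + 1),
      m.choose k • ((-1 : R) ^ k * (adIter A H k * A ^ (m - k))) := by
  have hD : -Dm A = LinearMap.mulLeft ℤ A - LinearMap.mulRight ℤ A := by
    simp [Dm, neg_sub]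
  have hc : Commute (LinearMap.mulRight ℤ A) (-Dm A) := by
    rw [hD]
    exact (LinearMap.commute_mulLeft_right A A).symm.sub_right (Commute.refl _)
  have hL : LinearMap.mulLeft ℤ A = LinearMap.mulRight ℤ A + -Dm A := by
    rw [hD]; abel
  have h1 : A ^ m * H = ((LinearMap.mulRight ℤ A + -Dm A) ^ m) H := by
    rw [← hL, LinearMap.pow_mulLeft, LinearMap.mulLeft_apply]
  rw [h1, hc.add_pow, LinearMap.sum_apply]
  have h2 : ∀ k ∈ Finset.range (m + 1),
      ((LinearMap.mulRight ℤ A ^ k * (-Dm A) ^ (m - k) * (m.choose k : Module.End ℤ R)) H)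
        = m.choose k • ((-1 : R) ^ (m - k) * (adIter A H (m - k) * A ^ k)) := by
    intro k hk
    rw [Module.End.mul_apply, Module.End.mul_apply, Module.End.natCast_apply,
      map_nsmul, map_nsmul, negDm_pow_apply, LinearMap.pow_mulRight,
      LinearMap.mulRight_apply, mul_assoc]
  rw [Finset.sum_congr rfl h2, ← Finset.sum_range_reflect]
  apply Finset.sum_congr rfl
  intro j hj
  have hj' : j ≤ m := Nat.lt_succ_iff.mp (Finset.mem_range.mp hj)
  rw [Nat.add_sub_cancel, Nat.choose_symm hj', Nat.sub_sub_self hj']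

end


/-- The commutator `[H, A^{2n+1}]` equals `(2n+1) Aⁿ [H,A] Aⁿ` plus terms with
higher-order commutators flanked by lower powers of `A`. -/
theorem stmt15 {R : Type*} [Ring R] (A H : R) (n : ℕ) :
    H * A ^ (2 * n + 1) - A ^ (2 * n + 1) * H
      = (2 * n + 1) • (A ^ n * (H * A - A * H) * A ^ n)
        + ∑ k ∈ Finset.Icc 2 (n + 1),
            (n + 1).choose k •
              (A ^ (n + 1 - k) * adIter A H k * A ^ n
                + (-1 : R) ^ (k - 1) * (A ^ n * adIter A H k * A ^ (n + 1 - k))) := by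
  have e1 : H * A ^ (2 * n + 1)
      = ∑ k ∈ Finset.range (n + 2),
          (n + 1).choose k • (A ^ (n + 1 - k) * adIter A H k * A ^ n) := by
    rw [show 2 * n + 1 = (n + 1) + n by ring, pow_add, ← mul_assoc, expand1 A H (n+1),
      Finset.sum_mul]
    exact Finset.sum_congr rfl fun k _ => by rw [smul_mul_assoc]
  have e2 : A ^ (2 * n + 1) * H
      = ∑ k ∈ Finset.range (n + 2),
          (n + 1).choose k • (A ^ n * ((-1 : R) ^ k * (adIter A H k * A ^ (n + 1 - k)))) := by
    rw [show 2 * n + 1 = n + (n + 1) by ring, pow_add, mul_assoc, expand2 A H (n+1),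
      Finset.mul_sum]
    exact Finset.sum_congr rfl fun k _ => by rw [mul_smul_comm]
  rw [e1, e2, ← Finset.sum_sub_distrib]
  have hg : ∀ k, (n + 1).choose k • (A ^ (n + 1 - k) * adIter A H k * A ^ n)
      - (n + 1).choose k • (A ^ n * ((-1 : R) ^ k * (adIter A H k * A ^ (n + 1 - k))))
      = (n + 1).choose k • (A ^ (n + 1 - k) * adIter A H k * A ^ n
          - A ^ n * ((-1 : R) ^ k * (adIter A H k * A ^ (n + 1 - k)))) := fun k =>
    (smul_sub _ _ _).symm
  simp only [hg]
  rw [Finset.sum_range_succ', Finset.sum_range_succ']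
  rw [show Finset.Icc 2 (n + 1) = Finset.Ico 2 (n + 2) from (Finset.Ico_add_one_right_eq_Icc 2 (n+1)).symm,
    Finset.sum_Ico_eq_sum_range, show n + 2 - 2 = n by omega]
  have hS : ∀ i ∈ Finset.range n,
      (n + 1).choose (i + 1 + 1) • (A ^ (n + 1 - (i + 1 + 1)) * adIter A H (i + 1 + 1) * A ^ n
          - A ^ n * ((-1 : R) ^ (i + 1 + 1) * (adIter A H (i + 1 + 1) * A ^ (n + 1 - (i + 1 + 1)))))
      = (n + 1).choose (2 + i) •
          (A ^ (n + 1 - (2 + i)) * adIter A H (2 + i) * A ^ n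
            + (-1 : R) ^ (2 + i - 1) * (A ^ n * adIter A H (2 + i) * A ^ (n + 1 - (2 + i)))) := by
    intro i _
    have h2 : i + 1 + 1 = 2 + i := by ring
    rw [h2]
    congr 1
    have h3 : 2 + i - 1 = i + 1 := by omega
    rw [h3]
    rcases Nat.even_or_odd i with h | h
    · rw [show (-1 : R) ^ (2 + i) = 1 by simp [pow_add, h.neg_one_pow],
        show (-1 : R) ^ (i + 1) = -1 by simp [pow_succ, h.neg_one_pow]]
      noncomm_ring
    · rw [show (-1 : R) ^ (2 + i) = -1 by simp [pow_add, h.neg_one_pow],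
        show (-1 : R) ^ (i + 1) = 1 by simp [pow_succ, h.neg_one_pow]]
      noncomm_ring
  rw [Finset.sum_congr rfl hS]
  -- now handle the k = 0 and k = 1 terms
  have h01 : (n + 1).choose (0 + 1) • (A ^ (n + 1 - (0 + 1)) * adIter A H (0 + 1) * A ^ n
        - A ^ n * ((-1 : R) ^ (0 + 1) * (adIter A H (0 + 1) * A ^ (n + 1 - (0 + 1)))))
      + (n + 1).choose 0 • (A ^ (n + 1 - 0) * adIter A H 0 * A ^ n
        - A ^ n * ((-1 : R) ^ 0 * (adIter A H 0 * A ^ (n + 1 - 0))))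
      = (2 * n + 1) • (A ^ n * (H * A - A * H) * A ^ n) := by
    simp only [zero_add, pow_one, Nat.choose_one_right, Nat.choose_zero_right,
      Nat.sub_zero, pow_zero, one_smul, one_mul, adIter, Nat.add_sub_cancel, neg_one_mul]
    rw [show A ^ (n+1) * H * A ^ n = A ^ n * (A * H) * A ^ n by rw [pow_succ]; noncomm_ring,
      show A ^ n * (H * A ^ (n+1)) = A ^ n * (H * A) * A ^ n by rw [pow_succ']; noncomm_ring,
      show A ^ n * (H * A - A * H) * A ^ n - A ^ n * -((H * A - A * H) * A ^ n)
          = A ^ n * (H * A - A * H) * A ^ n + A ^ n * (H * A - A * H) * A ^ n by noncomm_ring,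
      smul_add, ← add_nsmul,
      show A ^ n * (A * H) * A ^ n - A ^ n * (H * A) * A ^ n
          = -(A ^ n * (H * A - A * H) * A ^ n) by noncomm_ring,
      show n + 1 + (n + 1) = (2 * n + 1) + 1 by omega, succ_nsmul]
    abel
  rw [add_assoc, h01, add_comm]
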